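/- The set Π(X) of partitions corresponding to patterns of mutual independence of X has a unique finest element μ(X), given by the meet of all elements of Π(X), and μ(X) itself belongs to Π(X). -/

import Mathlib

open MeasureTheory ProbabilityTheory

/-- The partition associated with a setoid `π` on `N` is a pattern of mutual independence
for the family `X` if the σ-algebras generated by the subfamilies of `X` over the
blocks (equivalence classes) of `π` are mutually independent under `P`. -/
def IsIndepPattern {Ω N : Type*} [MeasurableSpace Ω] (P : Measure Ω)
    {E : N → Type*} (mE : ∀ i, MeasurableSpace (E i)) (X : ∀ i, Ω → E i)
    (π : Setoid N) : Prop :=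
  iIndep (fun c : Quotient π =>
    ⨆ i ∈ {j : N | Quotient.mk π j = c}, (mE i).comap (X i)) P

section Aux

variable {Ω : Type*} [MeasurableSpace Ω] {P : Measure Ω}

/-- iIndep over a subsingleton index type. -/
lemma iIndep_of_subsingleton' {ι : Type*} [Subsingleton ι] [IsProbabilityMeasure P]
    (m : ι → MeasurableSpace Ω) : iIndep m P := by
  rw [iIndep_iff]
  intro s f _
  obtain rfl | ⟨x, hx⟩ := s.eq_empty_or_nonempty
  · simp
  · have hs : s = {x} := by ext y; simp [Subsingleton.elim y x, hx]
    simp [hs]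

/-- Core combinatorial lemma: if the `n j` are mutually independent and each `m i ≤ n (g i)`
with `g` injective on `s`, then the product formula holds for sets measurable w.r.t. `m i`. -/
lemma meas_biInter_of_injOn {ι κ : Type*} [DecidableEq κ]
    {n : κ → MeasurableSpace Ω} (h : iIndep n P)
    {m : ι → MeasurableSpace Ω} (g : ι → κ) (hm : ∀ i, m i ≤ n (g i))
    (s : Finset ι) (hg : Set.InjOn g s) {f : ι → Set Ω}
    (hf : ∀ i ∈ s, MeasurableSet[m i] (f i)) :
    P (⋂ i ∈ s, f i) = ∏ i ∈ s, P (f i) := by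
  set F : κ → Set Ω := fun j => ⋂ i ∈ s.filter (fun i => g i = j), f i with hF
  have hFmeas : ∀ j ∈ s.image g, MeasurableSet[n j] (F j) := by
    intro j _
    refine Finset.measurableSet_biInter _ (fun i hi => ?_)
    rw [Finset.mem_filter] at hi
    have := hm i _ (hf i hi.1)
    rwa [hi.2] at this
  have hset : (⋂ j ∈ s.image g, F j) = ⋂ i ∈ s, f i := by
    ext x
    simp only [hF, Set.mem_iInter, Finset.mem_image, Finset.mem_filter]
    constructor
    · intro hx i hi
      exact hx (g i) ⟨i, hi, rfl⟩ i ⟨hi, rfl⟩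
    · rintro hx j ⟨i, hi, rfl⟩ i' ⟨hi', _⟩
      exact hx i' hi'
  have hFval : ∀ i ∈ s, F (g i) = f i := by
    intro i hi
    have : s.filter (fun i' => g i' = g i) = {i} := by
      ext i'
      simp only [Finset.mem_filter, Finset.mem_singleton]
      exact ⟨fun ⟨hi', he⟩ => hg hi' hi he, fun he => by subst he; exact ⟨hi, rfl⟩⟩
    calc F (g i) = ⋂ i' ∈ ({i} : Finset ι), f i' := by
          show (⋂ i' ∈ s.filter (fun i' => g i' = g i), f i') = _
          rw [this]
      _ = f i := by simp
  calc P (⋂ i ∈ s, f i) = P (⋂ j ∈ s.image g, F j) := by rw [hset]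
    _ = ∏ j ∈ s.image g, P (F j) := h.meas_biInter hFmeas
    _ = ∏ i ∈ s, P (F (g i)) := Finset.prod_image (fun a ha b hb => hg ha hb)
    _ = ∏ i ∈ s, P (f i) := Finset.prod_congr rfl (fun i hi => by rw [hFval i hi])

end Aux

section Patterns

variable {Ω N : Type*} [MeasurableSpace Ω] {P : Measure Ω} [IsProbabilityMeasure P]
  {E : N → Type*} {mE : ∀ i, MeasurableSpace (E i)} {X : ∀ i, Ω → E i}

lemma isIndepPattern_top [Nonempty N] : IsIndepPattern P mE X (⊤ : Setoid N) := by
  have : Subsingleton (Quotient (⊤ : Setoid N)) :=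
    ⟨fun a b => Quotient.inductionOn₂ a b fun x y => Quotient.sound trivial⟩
  exact iIndep_of_subsingleton' _

lemma IsIndepPattern.inf {π σ : Setoid N}
    (hπ : IsIndepPattern P mE X π) (hσ : IsIndepPattern P mE X σ) :
    IsIndepPattern P mE X (π ⊓ σ) := by
  classical
  set m' : Quotient (π ⊓ σ) → MeasurableSpace Ω := fun c =>
    ⨆ i ∈ {j : N | Quotient.mk (π ⊓ σ) j = c}, (mE i).comap (X i) with hm'
  set φ : Quotient (π ⊓ σ) → Quotient π := fun c => Quotient.mk π c.out with hφ
  set ψ : Quotient (π ⊓ σ) → Quotient σ := fun c => Quotient.mk σ c.out with hψ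
  -- block membership transfers along φ and ψ
  have hmkφ : ∀ (j : N) (c : Quotient (π ⊓ σ)), Quotient.mk (π ⊓ σ) j = c →
      Quotient.mk π j = φ c := by
    intro j c hj
    have h1 : Quotient.mk (π ⊓ σ) j = Quotient.mk (π ⊓ σ) c.out :=
      hj.trans (Quotient.out_eq c).symm
    exact Quotient.sound (Quotient.exact h1).1
  have hmkψ : ∀ (j : N) (c : Quotient (π ⊓ σ)), Quotient.mk (π ⊓ σ) j = c →
      Quotient.mk σ j = ψ c := by
    intro j c hj
    have h1 : Quotient.mk (π ⊓ σ) j = Quotient.mk (π ⊓ σ) c.out :=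
      hj.trans (Quotient.out_eq c).symm
    exact Quotient.sound (Quotient.exact h1).2
  have hinj : ∀ c d : Quotient (π ⊓ σ), φ c = φ d → ψ c = ψ d → c = d := by
    intro c d h1 h2
    have hr : (π ⊓ σ) c.out d.out := ⟨Quotient.exact h1, Quotient.exact h2⟩
    calc c = Quotient.mk (π ⊓ σ) c.out := (Quotient.out_eq c).symm
      _ = Quotient.mk (π ⊓ σ) d.out := Quotient.sound hr
      _ = d := Quotient.out_eq d
  have hleπ : ∀ c, m' c ≤ ⨆ i ∈ {j : N | Quotient.mk π j = φ c}, (mE i).comap (X i) := by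
    intro c
    refine iSup₂_le fun i hi => le_iSup₂_of_le i (hmkφ i c hi) le_rfl
  have hleσ : ∀ c, m' c ≤ ⨆ i ∈ {j : N | Quotient.mk σ j = ψ c}, (mE i).comap (X i) := by
    intro c
    refine iSup₂_le fun i hi => le_iSup₂_of_le i (hmkψ i c hi) le_rfl
  rw [IsIndepPattern, iIndep_iff]
  intro S f hf
  set T := S.image φ with hT
  have hset : (⋂ c ∈ S, f c) = ⋂ k ∈ T, ⋂ c ∈ S.filter (fun c => φ c = k), f c := by
    ext x
    simp only [Set.mem_iInter, Finset.mem_image, Finset.mem_filter, hT]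
    constructor
    · rintro hx k ⟨c, hc, rfl⟩ c' ⟨hc', _⟩
      exact hx c' hc'
    · intro hx c hc
      exact hx (φ c) ⟨c, hc, rfl⟩ c ⟨hc, rfl⟩
  have hinner : ∀ k ∈ T, MeasurableSet[⨆ i ∈ {j : N | Quotient.mk π j = k},
      (mE i).comap (X i)] (⋂ c ∈ S.filter (fun c => φ c = k), f c) := by
    intro k _
    refine Finset.measurableSet_biInter _ (fun c hc => ?_)
    rw [Finset.mem_filter] at hc
    have := hleπ c _ (hf c hc.1)
    rwa [hc.2] at this
  calc P (⋂ c ∈ S, f c)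
      = P (⋂ k ∈ T, ⋂ c ∈ S.filter (fun c => φ c = k), f c) := by rw [hset]
    _ = ∏ k ∈ T, P (⋂ c ∈ S.filter (fun c => φ c = k), f c) := hπ.meas_biInter hinner
    _ = ∏ k ∈ T, ∏ c ∈ S.filter (fun c => φ c = k), P (f c) := by
        refine Finset.prod_congr rfl (fun k hk => ?_)
        refine meas_biInter_of_injOn hσ ψ hleσ _ ?_
          (fun c hc => hf c (Finset.mem_filter.1 hc).1)
        intro c hc d hd hcd
        rw [Finset.coe_filter, Set.mem_setOf_eq] at hc hd
        exact hinj c d (hc.2.trans hd.2.symm) hcd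
    _ = ∏ c ∈ S, P (f c) :=
        Finset.prod_fiberwise_of_maps_to (fun c hc => Finset.mem_image_of_mem φ hc) _

lemma isIndepPattern_sInf [Nonempty N] {S : Set (Setoid N)} (hS : S.Finite) :
    (∀ π ∈ S, IsIndepPattern P mE X π) → IsIndepPattern P mE X (sInf S) := by
  refine Set.Finite.induction_on (motive := fun S _ => (∀ π ∈ S, IsIndepPattern P mE X π) → IsIndepPattern P mE X (sInf S)) S hS (fun _ => by simpa using isIndepPattern_top) ?_
  intro a s _ _ ih h
  rw [sInf_insert]
  exact (h a (Set.mem_insert a s)).inf (ih fun π hπ => h π (Set.mem_insert_of_mem a hπ))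

end Patterns

/-- **Theorem 1 (finest pattern).** For a finite nonempty index set `N`, the set `Π(X)` of
patterns of mutual independence of `X` has a unique finest element `μ(X)`, namely the meet
of all elements of `Π(X)`: this meet itself belongs to `Π(X)` and is finer than (≤) every
element of `Π(X)`. -/
theorem finest_indepPattern
    {Ω N : Type*} [MeasurableSpace Ω] (P : Measure Ω) [IsProbabilityMeasure P]
    [Finite N] [Nonempty N]
    {E : N → Type*} (mE : ∀ i, MeasurableSpace (E i)) (X : ∀ i, Ω → E i)
    (hX : ∀ i, Measurable (X i)) :
    IsIndepPattern P mE X (sInf {π : Setoid N | IsIndepPattern P mE X π}) ∧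
      ∀ π : Setoid N, IsIndepPattern P mE X π →
        sInf {π : Setoid N | IsIndepPattern P mE X π} ≤ π := by
  refine ⟨?_, fun π hπ => sInf_le hπ⟩
  have hfin : ({π : Setoid N | IsIndepPattern P mE X π}).Finite := by
    have : Finite (Setoid N) := by
      have hinj : Function.Injective (fun π : Setoid N => (⇑π : N → N → Prop)) := by
        intro a b hab
        exact Setoid.ext fun x y => iff_of_eq (congrFun (congrFun hab x) y)
      exact Finite.of_injective _ hinj
    exact Set.toFinite _
  exact isIndepPattern_sInf hfin (fun _ hπ => hπ)
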